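/- Let W be a Coxeter group, J ⊆ S, δ a twisting automorphism, and 𝒪 a δ-twisted W_J-conjugacy class in W for which the Red-Min property holds (from every element of 𝒪 there is a length-weakly-decreasing sequence of twisted conjugations by simple reflections in J reaching a minimal length element). Then the set of minimal length elements of 𝒪 coincides with the set of minimal elements of 𝒪 with respect to the Bruhat order. -/

import Mathlib

open CoxeterSystem

variable {B : Type*} {W : Type*} [Group W] {M : CoxeterMatrix B}

/-- The Bruhat order on a Coxeter group: `x ≤ w` iff `x` is the product of a subword of
some reduced word for `w`. -/
def BruhatLE (cs : CoxeterSystem M W) (x w : W) : Prop :=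
  ∃ ω : List B, cs.IsReduced ω ∧ cs.wordProd ω = w ∧
    ∃ ω' : List B, ω'.Sublist ω ∧ cs.wordProd ω' = x

/-- One step of length-nonincreasing `δ`-twisted conjugation by a simple reflection in `J`. -/
def TwistedStep (cs : CoxeterSystem M W) (J : Set B) (δ : W →* W) (w w' : W) : Prop :=
  ∃ i ∈ J, w' = cs.simple i * w * (δ (cs.simple i))⁻¹ ∧ cs.length w' ≤ cs.length w

namespace MinLenAux

open scoped Classical

variable (cs : CoxeterSystem M W)

noncomputable def sigmaFun (i : B) : W × ZMod 2 → W × ZMod 2 :=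
  fun p => (cs.simple i * p.1 * cs.simple i, p.2 + if p.1 = cs.simple i then 1 else 0)

lemma sigmaFun_involutive (i : B) : Function.Involutive (sigmaFun cs i) := by
  rintro ⟨t, e⟩
  simp only [sigmaFun]
  have h1 : cs.simple i * (cs.simple i * t * cs.simple i) * cs.simple i = t := by
    have := cs.simple_mul_simple_self i
    calc cs.simple i * (cs.simple i * t * cs.simple i) * cs.simple i
        = (cs.simple i * cs.simple i) * t * (cs.simple i * cs.simple i) := by group
      _ = t := by rw [this]; group
  have h2 : (cs.simple i * t * cs.simple i = cs.simple i) ↔ (t = cs.simple i) := by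
    constructor
    · intro h
      have : cs.simple i * (cs.simple i * t * cs.simple i) * cs.simple i
          = cs.simple i * cs.simple i * cs.simple i := by rw [h]
      rw [h1] at this
      rw [this, cs.simple_mul_simple_self, one_mul]
    · rintro rfl
      rw [cs.simple_mul_simple_self, one_mul]
  refine Prod.ext h1 ?_
  simp only [h2]
  by_cases h : t = cs.simple i <;> simp [h]
  rw [add_assoc, (by decide : (1:ZMod 2)+1 = 0), add_zero]

/-- The sign permutation attached to a simple reflection. -/
noncomputable def sigma (i : B) : Equiv.Perm (W × ZMod 2) :=
  (sigmaFun_involutive cs i).toPerm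

lemma sigma_apply (i : B) (t : W) (e : ZMod 2) :
    sigma cs i (t, e) = (cs.simple i * t * cs.simple i,
      e + if t = cs.simple i then 1 else 0) := rfl

lemma sigma_mul_pow_apply (i i' : B) (k : ℕ) (t : W) (e : ZMod 2) :
    ((sigma cs i * sigma cs i') ^ k) (t, e) =
      ((cs.simple i * cs.simple i') ^ k * t * ((cs.simple i * cs.simple i') ^ k)⁻¹,
       e + ∑ j ∈ Finset.range k,
         ((if t = (cs.simple i' * cs.simple i) ^ (2*j) * cs.simple i' then (1:ZMod 2) else 0)
          + (if t = (cs.simple i' * cs.simple i) ^ (2*j+1) * cs.simple i' then 1 else 0))) := by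
  set a := cs.simple i with ha
  set b := cs.simple i' with hb
  have haa : a * a = 1 := cs.simple_mul_simple_self i
  have hbb : b * b = 1 := cs.simple_mul_simple_self i'
  have hbinv : b⁻¹ = b := cs.inv_simple i'
  have hainv : a⁻¹ = a := cs.inv_simple i
  induction k generalizing t e with
  | zero => simp
  | succ k ih =>
    rw [pow_succ, Equiv.Perm.mul_apply]
    have hstep : (sigma cs i * sigma cs i') (t, e) =
        ((a*b) * t * (a*b)⁻¹,
         e + ((if t = (b*a)^(2*0) * b then (1:ZMod 2) else 0)
              + (if t = (b*a)^(2*0+1) * b then 1 else 0))) := by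
      rw [Equiv.Perm.mul_apply, sigma_apply, sigma_apply]
      have c1 : a * (b * t * b) * a = (a*b) * t * (a*b)⁻¹ := by
        rw [mul_inv_rev, hbinv, hainv]; group
      have c2 : (b * t * b = a) ↔ (t = (b*a)^(2*0+1) * b) := by
        constructor
        · intro h
          have : b * (b * t * b) * b = b * a * b := by rw [h]
          calc t = (b*b) * t * (b*b) := by rw [hbb]; group
            _ = b * (b * t * b) * b := by group
            _ = b * a * b := this
            _ = (b*a)^(2*0+1) * b := by group
        · rintro rfl
          calc b * ((b*a)^(2*0+1) * b) * b = (b*b) * a * (b * b) := by group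
            _ = a := by rw [hbb]; group
      have c3 : (t = b) ↔ (t = (b*a)^(2*0) * b) := by rw [pow_zero, one_mul]  -- 2*0=0
      rw [c1]
      congr 1
      rw [← c2, ← c3]
      by_cases h1 : t = b <;> by_cases h2 : b * t * b = a <;> simp [h1, h2, ← ha, ← hb] <;> ring
    rw [hstep, ih]
    have hcancel : ∀ Y : W, ((a*b) * t * (a*b)⁻¹ = Y) ↔ (t = (a*b)⁻¹ * Y * (a*b)) := by
      intro Y
      constructor
      · intro h; rw [← h]; group
      · intro h; rw [h]; group
    have hg : (a*b)⁻¹ = b*a := by rw [mul_inv_rev, hbinv, hainv]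
    have hval : ∀ m : ℕ, (b*a) * ((b*a)^m * b) * (a*b) = (b*a)^(m+2) * b := by
      intro m
      calc (b*a) * ((b*a)^m * b) * (a*b)
          = ((b*a) * (b*a)^m) * (b * (a*b)) := by simp only [mul_assoc]
        _ = (b*a)^(m+1) * (b * (a*b)) := by rw [← pow_succ']
        _ = ((b*a)^(m+1) * (b*a)) * b := by simp only [mul_assoc]
        _ = (b*a)^(m+2) * b := by rw [← pow_succ]
    have hconj : ∀ m : ℕ, ((a*b) * t * (a*b)⁻¹ = (b*a)^m * b) ↔ (t = (b*a)^(m+2) * b) := by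
      intro m
      rw [hcancel, hg, hval]
    have hfc : (a*b)^k * ((a*b) * t * (a*b)⁻¹) * ((a*b)^k)⁻¹
        = (a*b)^(k+1) * t * ((a*b)^(k+1))⁻¹ := by
      simp only [pow_succ, mul_inv_rev, mul_assoc]
    refine Prod.ext hfc ?_
    simp only []
    have hsum : ∑ j ∈ Finset.range k,
        ((if (a*b) * t * (a*b)⁻¹ = (b*a)^(2*j) * b then (1:ZMod 2) else 0)
          + (if (a*b) * t * (a*b)⁻¹ = (b*a)^(2*j+1) * b then 1 else 0))
        = ∑ j ∈ Finset.range k,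
        ((if t = (b*a)^(2*(j+1)) * b then (1:ZMod 2) else 0)
          + (if t = (b*a)^(2*(j+1)+1) * b then 1 else 0)) := by
      refine Finset.sum_congr rfl fun j _ => ?_
      have e1 : 2*j+2 = 2*(j+1) := by omega
      have e2 : (2*j+1)+2 = 2*(j+1)+1 := by omega
      rw [hconj (2*j), hconj (2*j+1), e1, e2]
    rw [hsum]
    rw [Finset.sum_range_succ']
    ring


lemma sigma_liftable : M.IsLiftable (sigma cs) := by
  intro i i'
  apply Equiv.ext
  rintro ⟨t, e⟩
  rw [sigma_mul_pow_apply, cs.simple_mul_simple_pow i i']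
  set m := M i i'
  set b := cs.simple i'
  set h := cs.simple i' * cs.simple i with hh
  have h1' : h ^ m = 1 := cs.simple_mul_simple_pow' i i'
  set f : ℕ → ZMod 2 := fun j => if t = h ^ j * b then 1 else 0 with hf
  have hpair : ∀ n : ℕ, ∑ j ∈ Finset.range n, (f (2*j) + f (2*j+1))
      = ∑ j ∈ Finset.range (2*n), f j := by
    intro n
    induction n with
    | zero => simp
    | succ n ihn =>
      have e1 : 2*(n+1) = (2*n+1)+1 := by omega
      rw [Finset.sum_range_succ, ihn, e1, Finset.sum_range_succ, Finset.sum_range_succ]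
      ring
  have hsplit : ∑ j ∈ Finset.range (2*m), f j = 0 := by
    rw [two_mul, Finset.sum_range_add]
    have : ∀ j, f (m + j) = f j := by
      intro j
      simp only [hf, pow_add, h1', one_mul]
    simp only [this]
    exact CharTwo.add_self_eq_zero _
  rw [hpair, hsplit]
  simp [Equiv.Perm.one_apply]

/-- The sign representation of the Coxeter group. -/
noncomputable def phi : W →* Equiv.Perm (W × ZMod 2) :=
  cs.lift ⟨sigma cs, sigma_liftable cs⟩

lemma phi_simple (i : B) : phi cs (cs.simple i) = sigma cs i :=
  cs.lift_apply_simple (sigma_liftable cs) i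

/-- Mod-2 count of an element in a list. -/
noncomputable def cnt (l : List W) (t : W) : ZMod 2 :=
  (l.map (fun x => if x = t then (1 : ZMod 2) else 0)).sum

lemma cnt_nil (t : W) : cnt ([] : List W) t = 0 := rfl

lemma cnt_cons (x : W) (l : List W) (t : W) :
    cnt (x :: l) t = (if x = t then 1 else 0) + cnt l t := by
  simp [cnt]

lemma cnt_eq_zero {l : List W} {t : W} (h : t ∉ l) : cnt l t = 0 := by
  induction l with
  | nil => rfl
  | cons x l ih =>
    rw [cnt_cons]
    have hx : x ≠ t := fun hc => h (hc ▸ List.mem_cons_self)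
    rw [if_neg hx, ih (fun hc => h (List.mem_cons_of_mem x hc)), add_zero]

lemma cnt_eq_one {l : List W} {t : W} (hnd : l.Nodup) (h : t ∈ l) : cnt l t = 1 := by
  induction l with
  | nil => cases h
  | cons x l ih =>
    rw [cnt_cons]
    rcases List.mem_cons.mp h with rfl | hmem
    · rw [if_pos rfl, cnt_eq_zero (List.Nodup.notMem hnd), add_zero]
    · have hx : x ≠ t := fun hc => (List.Nodup.notMem hnd) (hc ▸ hmem)
      rw [if_neg hx, ih (List.Nodup.of_cons hnd) hmem, zero_add]

lemma phi_wordProd (ω : List B) (t : W) (e : ZMod 2) :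
    phi cs (cs.wordProd ω) (t, e) =
      (cs.wordProd ω * t * (cs.wordProd ω)⁻¹, e + cnt (cs.rightInvSeq ω) t) := by
  induction ω generalizing t e with
  | nil => simp [cnt_nil, CoxeterSystem.wordProd_nil, CoxeterSystem.rightInvSeq]
  | cons i ω ih =>
    rw [cs.wordProd_cons, map_mul, Equiv.Perm.mul_apply, ih, phi_simple, sigma_apply]
    have hris : cs.rightInvSeq (i :: ω) =
        ((cs.wordProd ω)⁻¹ * cs.simple i * cs.wordProd ω) :: cs.rightInvSeq ω := rfl
    rw [hris, cnt_cons]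
    set u := cs.wordProd ω
    set a := cs.simple i
    have hfst : a * (u * t * u⁻¹) * a = (a * u) * t * (a * u)⁻¹ := by
      rw [mul_inv_rev, cs.inv_simple]
      simp only [mul_assoc]
      rfl
    have hcond : (u * t * u⁻¹ = a) ↔ (u⁻¹ * a * u = t) := by
      constructor
      · intro hc; rw [← hc]; group
      · intro hc; rw [← hc]; group
    refine Prod.ext hfst ?_
    simp only [hcond]
    ring

/-- The reflection-sign invariant. -/
noncomputable def eta (w t : W) : ZMod 2 := (phi cs w (t, 0)).2

lemma phi_apply (w t : W) (e : ZMod 2) :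
    phi cs w (t, e) = (w * t * w⁻¹, e + eta cs w t) := by
  obtain ⟨ω, -, rfl⟩ := cs.exists_reduced_word' w
  rw [phi_wordProd, eta, phi_wordProd]
  simp

lemma eta_mul (u v t : W) :
    eta cs (u * v) t = eta cs v t + eta cs u (v * t * v⁻¹) := by
  have h : phi cs (u * v) (t, 0) = phi cs u (phi cs v (t, 0)) := by
    rw [map_mul, Equiv.Perm.mul_apply]
  rw [phi_apply, phi_apply, phi_apply] at h
  have := congrArg Prod.snd h
  simpa using this

lemma eta_one (t : W) : eta cs 1 t = 0 := by
  simp [eta]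

lemma zmod2_cancel : ∀ x y : ZMod 2, x + y = 0 → x = y := by decide

lemma eta_inv (v t : W) : eta cs v⁻¹ t = eta cs v (v⁻¹ * t * v) := by
  have h := eta_mul cs v v⁻¹ t
  rw [mul_inv_cancel, eta_one] at h
  have h2 : v⁻¹ * t * v⁻¹⁻¹ = v⁻¹ * t * v := by rw [inv_inv]
  rw [h2] at h
  exact zmod2_cancel _ _ h.symm

lemma eta_simple_self (i : B) : eta cs (cs.simple i) (cs.simple i) = 1 := by
  rw [eta, phi_simple, sigma_apply, if_pos rfl]
  simp

lemma eta_reflection_self {t : W} (ht : cs.IsReflection t) : eta cs t t = 1 := by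
  obtain ⟨v, i, rfl⟩ := ht
  set a := cs.simple i with ha
  set t := v * a * v⁻¹ with htv
  have h1 : t = v * (a * v⁻¹) := by rw [htv]; group
  have h2 : eta cs t t = eta cs (a * v⁻¹) t + eta cs v ((a * v⁻¹) * t * (a * v⁻¹)⁻¹) := by
    rw [h1, eta_mul, ← h1]
  have haa : a * a = 1 := cs.simple_mul_simple_self i
  have h3 : (a * v⁻¹) * t * (a * v⁻¹)⁻¹ = a := by
    rw [htv, mul_inv_rev, inv_inv, cs.inv_simple]
    calc a * v⁻¹ * (v * a * v⁻¹) * (v * a)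
        = a * (v⁻¹ * v) * a * (v⁻¹ * v) * a := by simp only [mul_assoc]
      _ = (a * a) * a := by rw [inv_mul_cancel]; simp only [mul_one, mul_assoc]
      _ = a := by rw [haa, one_mul]
  have h4 : eta cs (a * v⁻¹) t = eta cs v⁻¹ t + eta cs a (v⁻¹ * t * v) := by
    rw [eta_mul]
    congr 2
    rw [inv_inv]
  have h5 : v⁻¹ * t * v = a := by
    rw [htv]
    calc v⁻¹ * (v * a * v⁻¹) * v = (v⁻¹ * v) * a * (v⁻¹ * v) := by simp only [mul_assoc]
      _ = a := by rw [inv_mul_cancel]; simp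
  have h6 : eta cs v⁻¹ t = eta cs v a := by rw [eta_inv, h5]
  rw [h2, h3, h4, h5, h6, eta_simple_self]
  have : ∀ x : ZMod 2, x + 1 + x = 1 := by decide
  exact this _

lemma eta_eq_one_of_inversion {w t : W} (ht : cs.IsReflection t)
    (hl : cs.length (w * t) < cs.length w) : eta cs w t = 1 := by
  by_contra hne
  have h0 : eta cs w t = 0 := by
    have : ∀ x : ZMod 2, x ≠ 1 → x = 0 := by decide
    exact this _ hne
  have hwt : eta cs (w * t) t = 1 := by
    rw [eta_mul]
    have htt : t * t * t⁻¹ = t := by group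
    rw [htt, h0, add_zero, eta_reflection_self cs ht]
  obtain ⟨κ, hκred, hκ⟩ := cs.exists_reduced_word' (w * t)
  have hcnt : cnt (cs.rightInvSeq κ) t = 1 := by
    have := phi_wordProd cs κ t 0
    rw [hκ] at hwt
    rw [eta] at hwt
    rw [this] at hwt
    simpa using hwt
  have hmem : t ∈ cs.rightInvSeq κ := by
    by_contra hmem
    rw [cnt_eq_zero hmem] at hcnt
    exact absurd hcnt (by decide)
  have hinv := cs.isRightInversion_of_mem_rightInvSeq hκred hmem
  rw [← hκ] at hinv
  have : cs.length (w * t * t) < cs.length (w * t) := hinv.2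
  have hww : w * t * t = w := by
    rw [mul_assoc, ht.mul_self, mul_one]
  rw [hww] at this
  omega

/-- Strong exchange property. -/
theorem strong_exchange {w t : W} (ht : cs.IsReflection t)
    (hl : cs.length (w * t) < cs.length w) {ω : List B} (hred : cs.IsReduced ω)
    (hw : cs.wordProd ω = w) :
    ∃ j, j < ω.length ∧ cs.wordProd (ω.eraseIdx j) = w * t := by
  have heta : eta cs w t = 1 := eta_eq_one_of_inversion cs ht hl
  have hcnt : cnt (cs.rightInvSeq ω) t = 1 := by
    have h := phi_wordProd cs ω t 0
    rw [← hw, eta] at heta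
    rw [h] at heta
    simpa using heta
  have hmem : t ∈ cs.rightInvSeq ω := by
    by_contra hmem
    rw [cnt_eq_zero hmem] at hcnt
    exact absurd hcnt (by decide)
  obtain ⟨j, hj, hjt⟩ := List.mem_iff_getElem.mp hmem
  rw [cs.length_rightInvSeq] at hj
  refine ⟨j, hj, ?_⟩
  have := cs.wordProd_mul_getD_rightInvSeq ω j
  rw [List.getD_eq_getElem _ 1 (by rw [cs.length_rightInvSeq]; exact hj), hjt, hw] at this
  exact this.symm

/-! ### The Bruhat order via reflection chains -/

/-- One step up in the Bruhat order. -/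
def BStep (x y : W) : Prop :=
  ∃ t : W, cs.IsReflection t ∧ y = x * t ∧ cs.length x < cs.length y

/-- The Bruhat order (chain form). -/
def BLE : W → W → Prop := Relation.ReflTransGen (BStep cs)

lemma ble_length_le {x w : W} (h : BLE cs x w) : cs.length x ≤ cs.length w := by
  induction h with
  | refl => exact le_refl _
  | tail h1 h2 ih => obtain ⟨t, -, -, hlt⟩ := h2; omega

lemma ble_eq_of_length_ge' {x w : W} (h : BLE cs x w) :
    cs.length w ≤ cs.length x → x = w := by
  induction h with
  | refl => intro _; rfl
  | @tail y z h1 h2 ih =>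
    intro hl
    exfalso
    obtain ⟨t, -, -, hlt⟩ := h2
    have := ble_length_le cs h1
    omega

lemma ble_eq_of_length_ge {x w : W} (h : BLE cs x w) (hl : cs.length w ≤ cs.length x) :
    x = w := ble_eq_of_length_ge' cs h hl

lemma bstep_left {y : W} (i : B) (h : cs.length y < cs.length (cs.simple i * y)) :
    BStep cs y (cs.simple i * y) :=
  ⟨y⁻¹ * cs.simple i * y, ⟨y⁻¹, i, by rw [inv_inv]⟩, by group, h⟩

lemma bstep_left_down {y : W} (i : B) (h : cs.length (cs.simple i * y) < cs.length y) :
    BStep cs (cs.simple i * y) y := by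
  refine ⟨y⁻¹ * cs.simple i * y, ⟨y⁻¹, i, by rw [inv_inv]⟩, ?_, h⟩
  calc y = (cs.simple i * cs.simple i) * y := by rw [cs.simple_mul_simple_self, one_mul]
    _ = cs.simple i * y * (y⁻¹ * cs.simple i * y) := by group

lemma bstep_right {y : W} (i : B) (h : cs.length y < cs.length (y * cs.simple i)) :
    BStep cs y (y * cs.simple i) :=
  ⟨cs.simple i, cs.isReflection_simple i, rfl, h⟩

lemma bstep_right_down {y : W} (i : B) (h : cs.length (y * cs.simple i) < cs.length y) :
    BStep cs (y * cs.simple i) y := by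
  refine ⟨cs.simple i, cs.isReflection_simple i, ?_, h⟩
  rw [mul_assoc, cs.simple_mul_simple_self, mul_one]

/-- Any word contains a reduced sublist with the same product. -/
lemma exists_reduced_sublist (σ : List B) :
    ∃ τ : List B, τ.Sublist σ ∧ cs.IsReduced τ ∧ cs.wordProd τ = cs.wordProd σ := by
  induction σ using List.reverseRecOn with
  | nil =>
    refine ⟨[], List.Sublist.refl _, ?_, rfl⟩
    show cs.length (cs.wordProd []) = _
    simp
  | append_singleton σ₀ i ih =>
    obtain ⟨τ, hsub, hred, hprod⟩ := ih
    have hτlen : τ.length = cs.length (cs.wordProd σ₀) := by rw [← hprod]; exact hred.symm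
    rcases cs.length_mul_simple (cs.wordProd σ₀) i with hup | hdown
    · refine ⟨τ ++ [i], hsub.append (List.Sublist.refl [i]), ?_, ?_⟩
      · show cs.length (cs.wordProd (τ ++ [i])) = (τ ++ [i]).length
        rw [cs.wordProd_append, hprod, cs.wordProd_singleton, hup]
        simp [hτlen.symm]
      · rw [cs.wordProd_append, cs.wordProd_append, hprod]
    · have hne := cs.length_mul_simple_ne (cs.wordProd σ₀) i
      have hlt : cs.length (cs.wordProd σ₀ * cs.simple i) < cs.length (cs.wordProd σ₀) := by
        omega
      obtain ⟨j, hj, hjp⟩ := strong_exchange cs (cs.isReflection_simple i) hlt hred hprod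
      refine ⟨τ.eraseIdx j, ((τ.eraseIdx_sublist j).trans hsub).trans
        (List.sublist_append_left σ₀ [i]), ?_, ?_⟩
      · show cs.length (cs.wordProd (τ.eraseIdx j)) = (τ.eraseIdx j).length
        have hlen' : (τ.eraseIdx j).length + 1 = τ.length := List.length_eraseIdx_add_one hj
        rw [hjp]
        omega
      · rw [hjp, cs.wordProd_append, cs.wordProd_singleton]

/-- Chain order implies reduced subwords of every reduced word. -/
lemma ble_subword {x w : W} (h : BLE cs x w) :
    ∀ ω : List B, cs.IsReduced ω → cs.wordProd ω = w →
      ∃ σ : List B, σ.Sublist ω ∧ cs.IsReduced σ ∧ cs.wordProd σ = x := by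
  induction h with
  | refl => exact fun ω h1 h2 => ⟨ω, List.Sublist.refl _, h1, h2⟩
  | @tail y z h1 hstep ih =>
    intro ω hred hw
    obtain ⟨t, ht, hyt, hlen⟩ := hstep
    have hy : z * t = y := by rw [hyt, mul_assoc, ht.mul_self, mul_one]
    have hlt : cs.length (z * t) < cs.length z := by rw [hy]; exact hlen
    obtain ⟨j, hj, hjp⟩ := strong_exchange cs ht hlt hred hw
    obtain ⟨τ, hτsub, hτred, hτprod⟩ := exists_reduced_sublist cs (ω.eraseIdx j)
    have hτy : cs.wordProd τ = y := by rw [hτprod, hjp]; exact hy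
    obtain ⟨σ, hσ, hσred, hσprod⟩ := ih τ hτred hτy
    exact ⟨σ, hσ.trans (hτsub.trans (ω.eraseIdx_sublist j)), hσred, hσprod⟩

/-- Single-step property Z. -/
lemma pz_step {y w : W} (h : BStep cs y w) (i : B) :
    BLE cs (cs.simple i * y) w ∨ BLE cs (cs.simple i * y) (cs.simple i * w) := by
  obtain ⟨t, ht, rfl, hlen⟩ := h
  have hyne := cs.length_simple_mul_ne y i
  rcases cs.length_simple_mul y i with hup | hdown
  · -- ascent on y
    rcases Nat.lt_trichotomy (cs.length (cs.simple i * y))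
      (cs.length (cs.simple i * (y * t))) with hc | hc | hc
    · exact Or.inr (Relation.ReflTransGen.single ⟨t, ht, by rw [mul_assoc], hc⟩)
    · exfalso
      have h2 := ht.length_mul_left_ne (cs.simple i * y)
      rw [mul_assoc] at h2
      exact h2 hc.symm
    · -- exchange argument
      obtain ⟨ρ, hρred, hρ⟩ := cs.exists_reduced_word' y
      have hκprod : cs.wordProd (i :: ρ) = cs.simple i * y := by rw [cs.wordProd_cons, ← hρ]
      have hκred : cs.IsReduced (i :: ρ) := by
        show cs.length (cs.wordProd (i :: ρ)) = _
        rw [hκprod, hup]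
        have : ρ.length = cs.length y := by rw [hρ]; exact hρred.symm
        simp [this]
      have hlt : cs.length ((cs.simple i * y) * t) < cs.length (cs.simple i * y) := by
        rw [mul_assoc]; exact hc
      obtain ⟨j, hj, hjp⟩ := strong_exchange cs ht hlt hκred hκprod
      cases j with
      | zero =>
        rw [List.eraseIdx_cons_zero, ← hρ] at hjp
        have hyeq : cs.simple i * y = y * t := by
          conv_lhs => rw [hjp]
          rw [← mul_assoc, ← mul_assoc, cs.simple_mul_simple_self, one_mul]
        exact Or.inl (hyeq ▸ Relation.ReflTransGen.refl)
      | succ j' =>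
        exfalso
        rw [List.eraseIdx_cons_succ, cs.wordProd_cons] at hjp
        have h2 : cs.wordProd (ρ.eraseIdx j') = y * t := by
          have := congrArg (fun z => cs.simple i * z) hjp
          simpa [← mul_assoc, cs.simple_mul_simple_self] using this
        have h3 : cs.length (y * t) ≤ (ρ.eraseIdx j').length := by
          rw [← h2]; exact cs.length_wordProd_le _
        have hj' : j' < ρ.length := by simpa using hj
        have h4 : (ρ.eraseIdx j').length + 1 = ρ.length := List.length_eraseIdx_add_one hj'
        have h5 : ρ.length = cs.length y := by rw [hρ]; exact hρred.symm
        omega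
  · -- descent on y
    have hlt : cs.length (cs.simple i * y) < cs.length y := by omega
    exact Or.inl ((Relation.ReflTransGen.single (bstep_left_down cs i hlt)).tail
      ⟨t, ht, rfl, hlen⟩)

/-- Property Z (Deodhar). -/
lemma pz {y w : W} (h : BLE cs y w) (i : B) :
    BLE cs (cs.simple i * y) w ∨ BLE cs (cs.simple i * y) (cs.simple i * w) := by
  induction h with
  | refl => exact Or.inr Relation.ReflTransGen.refl
  | @tail z w' h1 hstep ih =>
    rcases ih with h2 | h2
    · exact Or.inl (h2.tail hstep)
    · rcases pz_step cs hstep i with h3 | h3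
      · exact Or.inl (h2.trans h3)
      · exact Or.inr (h2.trans h3)

lemma ble_smul {y w : W} (i : B) (h : BLE cs y w)
    (hw : cs.length w < cs.length (cs.simple i * w)) :
    BLE cs (cs.simple i * y) (cs.simple i * w) := by
  rcases pz cs h i with h1 | h1
  · exact h1.tail (bstep_left cs i hw)
  · exact h1

lemma ble_smul' {y w : W} (i : B) (h : BLE cs y w)
    (hw : cs.length w < cs.length (cs.simple i * w)) :
    BLE cs (cs.simple i * y) (cs.simple i * w) ∧ BLE cs y (cs.simple i * w) := by
  exact ⟨ble_smul cs i h hw, h.tail (bstep_left cs i hw)⟩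

/-- Reduced subwords give chain order. -/
lemma ble_of_reduced_sublist : ∀ {ω σ : List B}, cs.IsReduced ω → σ.Sublist ω →
    cs.IsReduced σ → BLE cs (cs.wordProd σ) (cs.wordProd ω) := by
  intro ω
  induction ω with
  | nil =>
    intro σ _ hsub _
    rw [List.sublist_nil.mp hsub]
    exact Relation.ReflTransGen.refl
  | cons i ρ ih =>
    intro σ hred hsub hσred
    have hρred : cs.IsReduced ρ := by
      have := hred.drop 1
      simpa using this
    have hasc : cs.length (cs.wordProd ρ) < cs.length (cs.simple i * cs.wordProd ρ) := by
      have h1 : cs.length (cs.wordProd (i :: ρ)) = ρ.length + 1 := hred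
      rw [cs.wordProd_cons] at h1
      have h2 : cs.length (cs.wordProd ρ) = ρ.length := hρred
      omega
    rcases List.sublist_cons_iff.mp hsub with hsub' | ⟨σ₀, rfl, hsub'⟩
    · refine (ih hρred hsub' hσred).tail ?_
      rw [cs.wordProd_cons]
      exact bstep_left cs i hasc
    · have hσ₀red : cs.IsReduced σ₀ := by
        have := hσred.drop 1
        simpa using this
      have hasc₀ : cs.length (cs.wordProd σ₀) < cs.length (cs.simple i * cs.wordProd σ₀) := by
        have h1 : cs.length (cs.wordProd (i :: σ₀)) = σ₀.length + 1 := hσred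
        rw [cs.wordProd_cons] at h1
        have h2 : cs.length (cs.wordProd σ₀) = σ₀.length := hσ₀red
        omega
      rw [cs.wordProd_cons, cs.wordProd_cons]
      exact ble_smul cs i (ih hρred hsub' hσ₀red) hasc

/-- The subword order coincides with the chain order. -/
lemma bruhatLE_iff {x w : W} : BruhatLE cs x w ↔ BLE cs x w := by
  constructor
  · rintro ⟨ω, hred, hw, ω', hsub, hx⟩
    obtain ⟨τ, hτsub, hτred, hτprod⟩ := exists_reduced_sublist cs ω'
    have h := ble_of_reduced_sublist cs hred (hτsub.trans hsub) hτred
    rw [hτprod, hx, hw] at h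
    exact h
  · intro h
    obtain ⟨ω, hred, hw⟩ := cs.exists_reduced_word' w
    obtain ⟨σ, hsub, hσred, hσprod⟩ := ble_subword cs h ω hred hw.symm
    exact ⟨ω, hred, hw.symm, σ, hsub, hσprod⟩

lemma bstep_inv {x y : W} (h : BStep cs x y) : BStep cs x⁻¹ y⁻¹ := by
  obtain ⟨t, ht, rfl, hlen⟩ := h
  refine ⟨x * t * x⁻¹, ht.conj x, ?_, ?_⟩
  · rw [mul_inv_rev, ht.inv]; group
  · rw [cs.length_inv, cs.length_inv]; exact hlen

lemma ble_inv {x y : W} (h : BLE cs x y) : BLE cs x⁻¹ y⁻¹ := by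
  induction h with
  | refl => exact Relation.ReflTransGen.refl
  | tail h1 hstep ih => exact ih.tail (bstep_inv cs hstep)

/-- Lifting property, left version. -/
lemma lift_left {x w : W} (i : B) (hw : cs.length (cs.simple i * w) < cs.length w)
    (h : BLE cs x w) :
    (cs.length (cs.simple i * x) < cs.length x →
      BLE cs (cs.simple i * x) (cs.simple i * w)) ∧
    (cs.length x < cs.length (cs.simple i * x) → BLE cs x (cs.simple i * w)) := by
  obtain ⟨ρ, hρred, hρ⟩ := cs.exists_reduced_word' (cs.simple i * w)
  have hκprod : cs.wordProd (i :: ρ) = w := by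
    rw [cs.wordProd_cons, ← hρ, ← mul_assoc, cs.simple_mul_simple_self, one_mul]
  have hρlen : ρ.length = cs.length (cs.simple i * w) := by rw [hρ]; exact hρred.symm
  have hκred : cs.IsReduced (i :: ρ) := by
    show cs.length (cs.wordProd (i :: ρ)) = _
    rw [hκprod]
    have := cs.length_simple_mul_ne w i
    rcases cs.length_simple_mul w i with h1 | h1 <;> simp [List.length_cons] <;> omega
  obtain ⟨σ, hsub, hσred, hσprod⟩ := ble_subword cs h (i :: ρ) hκred hκprod
  rcases List.sublist_cons_iff.mp hsub with hsub' | ⟨σ₀, rfl, hsub'⟩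
  · have h1 : BLE cs x (cs.simple i * w) := by
      have := ble_of_reduced_sublist cs hρred hsub' hσred
      rw [hσprod, ← hρ] at this
      exact this
    refine ⟨fun hx => ?_, fun _ => h1⟩
    exact (Relation.ReflTransGen.single (bstep_left_down cs i hx)).trans h1
  · have hσ₀red : cs.IsReduced σ₀ := by
      have := hσred.drop 1
      simpa using this
    have hprod₀ : cs.wordProd σ₀ = cs.simple i * x := by
      have h1 : cs.simple i * cs.wordProd σ₀ = x := by
        rw [← cs.wordProd_cons]; exact hσprod
      rw [← h1, ← mul_assoc, cs.simple_mul_simple_self, one_mul]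
    have hlt : cs.length (cs.simple i * x) < cs.length x := by
      have h1 : cs.length (cs.wordProd σ₀) = σ₀.length := hσ₀red
      have h2 : cs.length (cs.wordProd (i :: σ₀)) = σ₀.length + 1 := hσred
      rw [hσprod] at h2
      rw [hprod₀] at h1
      omega
    have hble : BLE cs (cs.simple i * x) (cs.simple i * w) := by
      have := ble_of_reduced_sublist cs hρred hsub' hσ₀red
      rw [hprod₀, ← hρ] at this
      exact this
    exact ⟨fun _ => hble, fun hx => absurd hx (by omega)⟩

lemma lift_right {x w : W} (i : B) (hw : cs.length (w * cs.simple i) < cs.length w)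
    (h : BLE cs x w) :
    (cs.length (x * cs.simple i) < cs.length x →
      BLE cs (x * cs.simple i) (w * cs.simple i)) ∧
    (cs.length x < cs.length (x * cs.simple i) → BLE cs x (w * cs.simple i)) := by
  have hinv : ∀ z : W, cs.simple i * z⁻¹ = (z * cs.simple i)⁻¹ := by
    intro z
    rw [mul_inv_rev, cs.inv_simple]
  have hw' : cs.length (cs.simple i * w⁻¹) < cs.length w⁻¹ := by
    rw [hinv, cs.length_inv, cs.length_inv]
    exact hw
  have hL := lift_left cs i hw' (ble_inv cs h)
  constructor
  · intro hx
    have hx' : cs.length (cs.simple i * x⁻¹) < cs.length x⁻¹ := by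
      rw [hinv, cs.length_inv, cs.length_inv]
      exact hx
    have h1 := ble_inv cs (hL.1 hx')
    rw [hinv, hinv, inv_inv, inv_inv] at h1
    exact h1
  · intro hx
    have hx' : cs.length x⁻¹ < cs.length (cs.simple i * x⁻¹) := by
      rw [hinv, cs.length_inv, cs.length_inv]
      exact hx
    have h1 := ble_inv cs (hL.2 hx')
    rw [hinv, inv_inv, inv_inv] at h1
    exact h1

lemma ble_mul' {y w : W} (i : B) (h : BLE cs y w)
    (hw : cs.length w < cs.length (w * cs.simple i)) :
    BLE cs (y * cs.simple i) (w * cs.simple i) ∧ BLE cs y (w * cs.simple i) := by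
  have h2 : BLE cs y (w * cs.simple i) := h.tail (bstep_right cs i hw)
  refine ⟨?_, h2⟩
  have hne := cs.length_mul_simple_ne y i
  rcases Nat.lt_or_ge (cs.length (y * cs.simple i)) (cs.length y) with hy | hy
  · exact (Relation.ReflTransGen.single (bstep_right_down cs i hy)).trans h2
  · have hy' : cs.length y < cs.length (y * cs.simple i) := by omega
    have hinv : ∀ z : W, cs.simple i * z⁻¹ = (z * cs.simple i)⁻¹ := by
      intro z
      rw [mul_inv_rev, cs.inv_simple]
    have h1 := ble_smul cs i (ble_inv cs h)
      (by rw [hinv, cs.length_inv, cs.length_inv]; exact hw)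
    have h3 := ble_inv cs h1
    rw [hinv, hinv, inv_inv, inv_inv] at h3
    exact h3

/-- The diamond lemma. -/
lemma diamond (i i' : B) (u : W) (hau : cs.length u < cs.length (cs.simple i * u))
    (hub : cs.length u < cs.length (u * cs.simple i'))
    (hl : cs.length (cs.simple i * u * cs.simple i') = cs.length u) :
    cs.simple i * u = u * cs.simple i' := by
  obtain ⟨ρ, hρred, hρ⟩ := cs.exists_reduced_word' u
  have hρlen : ρ.length = cs.length u := by rw [hρ]; exact hρred.symm
  have hκprod : cs.wordProd (i :: ρ) = cs.simple i * u := by rw [cs.wordProd_cons, ← hρ]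
  have hκred : cs.IsReduced (i :: ρ) := by
    show cs.length (cs.wordProd (i :: ρ)) = _
    rw [hκprod]
    have := cs.length_simple_mul_ne u i
    rcases cs.length_simple_mul u i with h1 | h1 <;> simp [List.length_cons] <;> omega
  have hlt : cs.length ((cs.simple i * u) * cs.simple i') < cs.length (cs.simple i * u) := by
    have := cs.length_simple_mul_ne u i
    rcases cs.length_simple_mul u i with h1 | h1 <;> omega
  obtain ⟨j, hj, hjp⟩ := strong_exchange cs (cs.isReflection_simple i') hlt hκred hκprod
  cases j with
  | zero =>
    rw [List.eraseIdx_cons_zero, ← hρ] at hjp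
    have := congrArg (fun z => cs.simple i * z) hjp
    simpa [← mul_assoc, cs.simple_mul_simple_self] using this
  | succ j' =>
    exfalso
    rw [List.eraseIdx_cons_succ, cs.wordProd_cons] at hjp
    have h2 : cs.wordProd (ρ.eraseIdx j') = u * cs.simple i' := by
      have := congrArg (fun z => cs.simple i * z) hjp
      simpa [← mul_assoc, cs.simple_mul_simple_self] using this
    have h3 : cs.length (u * cs.simple i') ≤ (ρ.eraseIdx j').length := by
      rw [← h2]; exact cs.length_wordProd_le _
    have hj' : j' < ρ.length := by simpa using hj
    have h4 : (ρ.eraseIdx j').length + 1 = ρ.length := List.length_eraseIdx_add_one hj'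
    omega

/-- A length-decreasing twisted conjugation step goes down in Bruhat order. -/
lemma drop_le (i i' : B) (w : W)
    (h : cs.length (cs.simple i * w * cs.simple i') + 2 = cs.length w) :
    BLE cs (cs.simple i * w * cs.simple i') w := by
  have hbd := cs.length_mul_simple (cs.simple i * w) i'
  have haw : cs.length (cs.simple i * w) + 1 = cs.length w := by
    have := cs.length_simple_mul_ne w i
    rcases cs.length_simple_mul w i with h1 | h1 <;> omega
  obtain ⟨τ, hτred, hτ⟩ := cs.exists_reduced_word' (cs.simple i * w * cs.simple i')
  have hτlen : τ.length = cs.length (cs.simple i * w * cs.simple i') := by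
    rw [hτ]; exact hτred.symm
  have h1 : cs.wordProd (τ ++ [i']) = cs.simple i * w := by
    rw [cs.wordProd_append, cs.wordProd_singleton, ← hτ, mul_assoc,
      cs.simple_mul_simple_self, mul_one]
  have h2 : cs.wordProd (i :: (τ ++ [i'])) = w := by
    rw [cs.wordProd_cons, h1, ← mul_assoc, cs.simple_mul_simple_self, one_mul]
  have hred2 : cs.IsReduced (i :: (τ ++ [i'])) := by
    show cs.length (cs.wordProd (i :: (τ ++ [i']))) = _
    rw [h2]
    have hlen2 : (i :: (τ ++ [i'])).length = τ.length + 2 := by simp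
    rw [hlen2]
    omega
  have hsub : τ.Sublist (i :: (τ ++ [i'])) := (List.sublist_append_left τ [i']).cons i
  have := ble_of_reduced_sublist cs hred2 hsub hτred
  rw [← hτ, h2] at this
  exact this

/-- The key lemma: equal-length twisted conjugation interacts with the Bruhat order. -/
lemma key_lemma (i i' : B) (w x : W)
    (hlen : cs.length (cs.simple i * w * cs.simple i') = cs.length w)
    (hx : BLE cs x w) :
    BLE cs x (cs.simple i * w * cs.simple i') ∨
      BLE cs (cs.simple i * x * cs.simple i') (cs.simple i * w * cs.simple i') := by
  have hbne := cs.length_mul_simple_ne w i'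
  have hane := cs.length_simple_mul_ne w i
  rcases cs.length_mul_simple w i' with hbup | hbdown
  · rcases cs.length_simple_mul w i with haup | hadown
    · -- both ascents: diamond forces s i * w * s i' = w
      have hd := diamond cs i i' w (by omega) (by omega) hlen
      have hww : cs.simple i * w * cs.simple i' = w := by
        rw [hd, mul_assoc, cs.simple_mul_simple_self, mul_one]
      rw [hww]
      exact Or.inl hx
    · -- descent on the left
      have halt : cs.length (cs.simple i * w) < cs.length w := by omega
      have hbasc : cs.length (cs.simple i * w) <
          cs.length ((cs.simple i * w) * cs.simple i') := by
        have : cs.length (cs.simple i * w * cs.simple i') = cs.length w := hlen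
        omega
      have hL := lift_left cs i halt hx
      have hxne := cs.length_simple_mul_ne x i
      rcases Nat.lt_or_ge (cs.length (cs.simple i * x)) (cs.length x) with hxd | hxd
      · have h1 := hL.1 hxd
        have h2 := (ble_mul' cs i' h1 hbasc).1
        exact Or.inr h2
      · have h1 := hL.2 (by omega)
        exact Or.inl (ble_mul' cs i' h1 hbasc).2
  · -- descent on the right
    have hblt : cs.length (w * cs.simple i') < cs.length w := by omega
    have haasc : cs.length (w * cs.simple i') <
        cs.length (cs.simple i * (w * cs.simple i')) := by
      have h1 : cs.simple i * (w * cs.simple i') = cs.simple i * w * cs.simple i' := by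
        rw [mul_assoc]
      rw [h1, hlen]
      omega
    have hR := lift_right cs i' hblt hx
    have hxne := cs.length_mul_simple_ne x i'
    rcases Nat.lt_or_ge (cs.length (x * cs.simple i')) (cs.length x) with hxd | hxd
    · have h1 := hR.1 hxd
      have h2 := (ble_smul' cs i h1 haasc).1
      rw [← mul_assoc, ← mul_assoc] at h2
      exact Or.inr h2
    · have h1 := hR.2 (by omega)
      have h2 := (ble_smul' cs i h1 haasc).2
      rw [← mul_assoc] at h2
      exact Or.inl h2

end MinLenAux

open MinLenAux in
/-- Let `𝒪` be a `δ`-twisted `W_J`-conjugacy class in `W` (the orbit of some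
element under `u · w = u w δ(u)⁻¹` for `u ∈ W_J`) satisfying the Red-Min property: from
every element of `𝒪` there is a chain of length-nonincreasing twisted conjugations by
simple reflections in `J` reaching a minimal length element of `𝒪`. Then the minimal
length elements of `𝒪` are exactly the minimal elements of `𝒪` for the Bruhat order. -/
theorem min_length_eq_bruhat_min (cs : CoxeterSystem M W) (J : Set B) (δ : W ≃* W)
    (hδ : ∀ i ∈ J, ∃ i' ∈ J, δ (cs.simple i) = cs.simple i')
    (𝒪 : Set W) (w₀ : W)
    (h𝒪 : 𝒪 = {w | ∃ u ∈ Subgroup.closure (cs.simple '' J), w = u * w₀ * (δ u)⁻¹})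
    (hRM : ∀ w ∈ 𝒪, ∃ w', Relation.ReflTransGen (TwistedStep cs J (δ : W →* W)) w w' ∧
      ∀ v ∈ 𝒪, cs.length w' ≤ cs.length v) :
    {w ∈ 𝒪 | ∀ v ∈ 𝒪, cs.length w ≤ cs.length v} =
      {w ∈ 𝒪 | ∀ v ∈ 𝒪, BruhatLE cs v w → v = w} := by
  have hco : ∀ z : W, (δ : W →* W) z = δ z := fun z => rfl
  have hclosed : ∀ i ∈ J, ∀ w ∈ 𝒪, cs.simple i * w * ((δ : W →* W) (cs.simple i))⁻¹ ∈ 𝒪 := by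
    intro i hi w hw
    rw [h𝒪] at hw ⊢
    obtain ⟨u, hu, rfl⟩ := hw
    refine ⟨cs.simple i * u, mul_mem (Subgroup.subset_closure ⟨i, hi, rfl⟩) hu, ?_⟩
    rw [hco, map_mul, mul_inv_rev]
    group
  ext w
  constructor
  · rintro ⟨hw, hmin⟩
    refine ⟨hw, fun v hv hle => ?_⟩
    exact ble_eq_of_length_ge cs ((bruhatLE_iff cs).mp hle) (hmin v hv)
  · rintro ⟨hw, hbmin⟩
    refine ⟨hw, fun v hv => ?_⟩
    obtain ⟨w', hchain, hw'min⟩ := hRM w hw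
    suffices hlw : cs.length w = cs.length w' by rw [hlw]; exact hw'min v hv
    clear hv v
    have main : ∀ x, Relation.ReflTransGen (TwistedStep cs J (δ : W →* W)) x w' →
        x ∈ 𝒪 → (∀ v ∈ 𝒪, BruhatLE cs v x → v = x) → cs.length x = cs.length w' := by
      intro x hch
      induction hch using Relation.ReflTransGen.head_induction_on with
      | refl => intro _ _; rfl
      | head hstep hrest ih =>
        rename_i a c
        intro hx hxmin
        obtain ⟨i, hiJ, hc, hlenle⟩ := hstep
        obtain ⟨i', hi'J, hdel⟩ := hδ i hiJ
        have hb : ((δ : W →* W) (cs.simple i))⁻¹ = cs.simple i' := by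
          rw [hco, hdel, cs.inv_simple]
        rw [hb] at hc
        have hcO : c ∈ 𝒪 := by
          have := hclosed i hiJ a hx
          rw [hb] at this
          rw [hc]
          exact this
        have hcancel : ∀ z : W,
            cs.simple i * (cs.simple i * z * cs.simple i') * cs.simple i' = z := by
          intro z
          calc cs.simple i * (cs.simple i * z * cs.simple i') * cs.simple i'
              = (cs.simple i * cs.simple i) * z * (cs.simple i' * cs.simple i') := by group
            _ = z := by
                rw [cs.simple_mul_simple_self, cs.simple_mul_simple_self, one_mul, mul_one]
        have hback : cs.simple i * c * cs.simple i' = a := by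
          rw [hc]; exact hcancel a
        have hne1 := cs.length_simple_mul_ne a i
        have hne2 := cs.length_mul_simple_ne (cs.simple i * a) i'
        have h1 := cs.length_simple_mul a i
        have h2 := cs.length_mul_simple (cs.simple i * a) i'
        have hceq : cs.length c = cs.length (cs.simple i * a * cs.simple i') := by rw [hc]
        rcases Nat.lt_or_ge (cs.length c) (cs.length a) with hlt | hge
        · exfalso
          have hdrop : cs.length (cs.simple i * a * cs.simple i') + 2 = cs.length a := by
            omega
          have hble := drop_le cs i i' a hdrop
          have hceqa := hxmin c hcO ((bruhatLE_iff cs).mpr (by rw [hc]; exact hble))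
          rw [hceqa] at hlt
          omega
        · have hceqlen : cs.length c = cs.length a := le_antisymm hlenle hge
          have hcmin : ∀ v ∈ 𝒪, BruhatLE cs v c → v = c := by
            intro v hv hle
            have hlen2 : cs.length (cs.simple i * c * cs.simple i') = cs.length c := by
              rw [hback, hceqlen]
            rcases key_lemma cs i i' c v hlen2 ((bruhatLE_iff cs).mp hle) with h3 | h3
            · rw [hback] at h3
              have hva := hxmin v hv ((bruhatLE_iff cs).mpr h3)
              have hac : a = c := by
                have hble_ac : BLE cs a c := by
                  have := (bruhatLE_iff cs).mp hle
                  rw [hva] at this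
                  exact this
                exact ble_eq_of_length_ge cs hble_ac (by omega)
              rw [hva, hac]
            · rw [hback] at h3
              have hv2 : cs.simple i * v * cs.simple i' ∈ 𝒪 := by
                have := hclosed i hiJ v hv
                rw [hb] at this
                exact this
              have heq := hxmin _ hv2 ((bruhatLE_iff cs).mpr h3)
              have : v = cs.simple i * a * cs.simple i' := by
                rw [← heq]
                exact (hcancel v).symm
              rw [this, hc]
          have := ih hcO hcmin
          omega
    exact main w hchain hw hbmin
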